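/- Let K = ℚ(√(−d)) be an imaginary quadratic field and p a rational prime totally ramified in K, with 𝔭 the unique prime ideal of O_K above p. Let C ⊆ 𝔽_p^N be a linear code and ρ : O_K^N → (O_K/𝔭)^N ≅ 𝔽_p^N componentwise reduction. If x ∈ ρ^{-1}(C⊥) and y ∈ ρ^{-1}(C), then Tr_{K/ℚ}(Σ_{i=1}^N xᵢ ȳᵢ) ∈ pℤ, where ȳᵢ denotes complex conjugation. -/

import Mathlib

set_option synthInstance.maxHeartbeats 1000000
set_option maxHeartbeats 1000000

open NumberField

/-- The dual code of a linear code `C ⊆ R^ι` with respect to the standard dot product. -/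
def dualCode {R : Type*} [CommRing R] {ι : Type*} [Fintype ι]
    (C : Submodule R (ι → R)) : Submodule R (ι → R) where
  carrier := {x | ∀ y ∈ C, ∑ i, x i * y i = 0}
  zero_mem' := by intro y hy; simp
  add_mem' := by
    intro a b ha hb y hy
    simp only [Pi.add_apply, add_mul, Finset.sum_add_distrib, ha y hy, hb y hy, add_zero]
  smul_mem' := by
    intro c a ha y hy
    simp only [Pi.smul_apply, smul_eq_mul, mul_assoc, ← Finset.mul_sum, ha y hy, mul_zero]

theorem statement14 (d : ℤ) (hd : Squarefree d) (hd0 : 0 < d)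
    (K : Type*) [Field K] [NumberField K] (hrank : Module.finrank ℚ K = 2)
    (sqrtd : K) (hsqrtd : sqrtd ^ 2 = -(d : K))
    (conj : K ≃ₐ[ℚ] K) (hconj : conj sqrtd = -sqrtd)
    (p : ℕ) (hp : p.Prime) (𝔭 : Ideal (𝓞 K)) (h𝔭 : 𝔭.IsPrime)
    (hram : 𝔭 * 𝔭 = Ideal.span {(p : 𝓞 K)})
    (N : ℕ) (C : Submodule (𝓞 K ⧸ 𝔭) (Fin N → 𝓞 K ⧸ 𝔭))
    (x y : Fin N → 𝓞 K)
    (hx : (fun i => Ideal.Quotient.mk 𝔭 (x i)) ∈ dualCode C)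
    (hy : (fun i => Ideal.Quotient.mk 𝔭 (y i)) ∈ C) :
    ∃ m : ℤ, Algebra.trace ℚ K (∑ i, (x i : K) * conj (y i : K)) = (p : ℚ) * (m : ℚ) := by
  classical
  haveI := Fact.mk hp
  -- the restriction of conj to the ring of integers
  set σ : (𝓞 K) ≃ₐ[ℤ] (𝓞 K) := galRestrict ℤ ℚ K (𝓞 K) conj with hσdef
  have hσcoe : ∀ z : 𝓞 K, ((σ z : 𝓞 K) : K) = conj (z : K) := fun z =>
    algebraMap_galRestrict_apply ℤ conj z
  -- σ maps 𝔭 to 𝔭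
  have hmap : Ideal.map σ 𝔭 = 𝔭 := by
    have hσp : σ ((p : ℕ) : 𝓞 K) = ((p : ℕ) : 𝓞 K) := map_natCast σ p
    have hmul : Ideal.map σ 𝔭 * Ideal.map σ 𝔭 = Ideal.span {(p : 𝓞 K)} := by
      rw [← Ideal.map_mul, hram, Ideal.map_span, Set.image_singleton, hσp]
    haveI : (Ideal.map σ 𝔭).IsPrime := Ideal.map_isPrime_of_equiv σ
    have h1 : 𝔭 ≤ Ideal.map σ 𝔭 := by
      have : 𝔭 * 𝔭 ≤ Ideal.map σ 𝔭 := by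
        rw [hram, ← hmul]; exact Ideal.mul_le_left
      rcases (Ideal.IsPrime.mul_le ‹_›).mp this with h | h <;> exact h
    have h2 : Ideal.map σ 𝔭 ≤ 𝔭 := by
      have : Ideal.map σ 𝔭 * Ideal.map σ 𝔭 ≤ 𝔭 := by
        rw [hmul, ← hram]; exact Ideal.mul_le_left
      rcases (Ideal.IsPrime.mul_le h𝔭).mp this with h | h <;> exact h
    exact le_antisymm h2 h1
  -- p ∈ 𝔭
  have hp𝔭 : ((p : ℕ) : 𝓞 K) ∈ 𝔭 := by
    have : Ideal.span {(p : 𝓞 K)} ≤ 𝔭 := by rw [← hram]; exact Ideal.mul_le_left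
    exact this (Ideal.subset_span rfl)
  -- the residue field has cardinality p
  have hcard : Nat.card (𝓞 K ⧸ 𝔭) = p := by
    have hN := congrArg Ideal.absNorm hram
    rw [map_mul, Ideal.absNorm_span_singleton] at hN
    have hnorm : Algebra.norm ℤ ((p : 𝓞 K)) = (p : ℤ) ^ 2 := by
      have b := Module.Free.chooseBasis ℤ (𝓞 K)
      have hb := Algebra.norm_algebraMap_of_basis b ((p : ℕ) : ℤ)
      rw [show ((p : 𝓞 K)) = algebraMap ℤ (𝓞 K) ((p : ℕ) : ℤ) by push_cast; ring]
      rw [hb, ← Module.finrank_eq_card_chooseBasisIndex, NumberField.RingOfIntegers.rank, hrank]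
    rw [hnorm] at hN
    have : Ideal.absNorm 𝔭 * Ideal.absNorm 𝔭 = p * p := by
      have : ((p:ℤ)^2).natAbs = p * p := by
        rw [Int.natAbs_pow]; simp [sq]
      omega
    have habs : Ideal.absNorm 𝔭 = p := by nlinarith [this]
    rw [← habs, Ideal.absNorm_apply, Submodule.cardQuot_apply]
  haveI : Finite (𝓞 K ⧸ 𝔭) := Nat.finite_of_card_ne_zero (by rw [hcard]; exact hp.pos.ne')
  haveI : Fintype (𝓞 K ⧸ 𝔭) := Fintype.ofFinite _
  haveI : Nontrivial (𝓞 K ⧸ 𝔭) := Ideal.Quotient.nontrivial_iff.mpr h𝔭.ne_top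
  haveI : CharP (𝓞 K ⧸ 𝔭) p := by
    rw [CharP.charP_iff_prime_eq_zero hp]
    rw [show ((p : ℕ) : 𝓞 K ⧸ 𝔭) = Ideal.Quotient.mk 𝔭 ((p : ℕ) : 𝓞 K) by push_cast; rfl]
    exact Ideal.Quotient.eq_zero_iff_mem.mpr hp𝔭
  -- σ acts trivially on the residue field
  have hτ : ∀ z : 𝓞 K, Ideal.Quotient.mk 𝔭 (σ z) = Ideal.Quotient.mk 𝔭 z := by
    have hle : 𝔭 ≤ Ideal.comap (σ : 𝓞 K →+* 𝓞 K) 𝔭 := by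
      intro a ha
      have : σ a ∈ Ideal.map σ 𝔭 := Ideal.mem_map_of_mem σ ha
      rw [hmap] at this; exact this
    set τ : (𝓞 K ⧸ 𝔭) →+* (𝓞 K ⧸ 𝔭) := Ideal.quotientMap 𝔭 (σ : 𝓞 K →+* 𝓞 K) hle with hτdef
    set g : ZMod p →+* (𝓞 K ⧸ 𝔭) := ZMod.castHom dvd_rfl _ with hgdef
    have hgsurj : Function.Surjective g := by
      have hginj : Function.Injective g := g.injective
      have : Function.Bijective g := (Fintype.bijective_iff_injective_and_card g).mpr
        ⟨hginj, by rw [ZMod.card, ← Nat.card_eq_fintype_card, hcard]⟩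
      exact this.surjective
    have hcomp : τ.comp g = g := RingHom.ext_zmod _ _
    intro z
    obtain ⟨w, hw⟩ := hgsurj (Ideal.Quotient.mk 𝔭 z)
    have : τ (Ideal.Quotient.mk 𝔭 z) = Ideal.Quotient.mk 𝔭 z := by
      rw [← hw, ← RingHom.comp_apply, hcomp]
    rw [← this, hτdef, Ideal.quotientMap_mk]
    rfl
  -- the key element
  set X : 𝓞 K := ∑ i, x i * σ (y i) with hXdef
  have hXcoe : (X : K) = ∑ i, (x i : K) * conj (y i : K) := by
    rw [hXdef]
    push_cast
    exact Finset.sum_congr rfl fun i _ => congrArg _ (hσcoe (y i))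
  have hXmem : X ∈ 𝔭 := by
    rw [← Ideal.Quotient.eq_zero_iff_mem, hXdef]
    rw [map_sum]
    have : ∀ i : Fin N, Ideal.Quotient.mk 𝔭 (x i * σ (y i))
        = Ideal.Quotient.mk 𝔭 (x i) * Ideal.Quotient.mk 𝔭 (y i) := by
      intro i; rw [map_mul, hτ]
    rw [Finset.sum_congr rfl fun i _ => this i]
    exact hx _ hy
  have hσXmem : σ X ∈ 𝔭 := by
    have : σ X ∈ Ideal.map σ 𝔭 := Ideal.mem_map_of_mem σ hXmem
    rwa [hmap] at this
  set a : 𝓞 K := X + σ X with hadef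
  have hamem : a ∈ 𝔭 := Ideal.add_mem 𝔭 hXmem hσXmem
  have hsq : (p : 𝓞 K) ∣ a * a := by
    have : a * a ∈ Ideal.span {(p : 𝓞 K)} := by
      rw [← hram]; exact Ideal.mul_mem_mul hamem hamem
    exact (Ideal.mem_span_singleton).mp this
  -- Galois theory: trace = x + conj x
  have hd0K : sqrtd ≠ 0 := by
    intro h
    rw [h] at hsqrtd
    have : (d : K) = 0 := by simpa [eq_comm, neg_eq_zero] using hsqrtd
    exact hd0.ne' (by exact_mod_cast this)
  have hconjne : conj ≠ AlgEquiv.refl := by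
    intro h
    rw [h] at hconj
    simp only [AlgEquiv.coe_refl, id_eq] at hconj
    have h2 : (2 : K) * sqrtd = 0 := by linear_combination hconj
    rcases mul_eq_zero.mp h2 with h' | h'
    · exact two_ne_zero h'
    · exact hd0K h'
  have hcard2 : Fintype.card (K ≃ₐ[ℚ] K) = 2 := by
    have hle : Fintype.card (K ≃ₐ[ℚ] K) ≤ 2 := by
      set L := AlgebraicClosure K
      have hinj : Function.Injective
          (fun φ : K ≃ₐ[ℚ] K => (IsScalarTower.toAlgHom ℚ K L).comp φ.toAlgHom) := by
        intro φ ψ h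
        ext z
        have := congrArg (fun f : K →ₐ[ℚ] L => f z) h
        simp only [AlgHom.coe_comp, Function.comp_apply, IsScalarTower.coe_toAlgHom'] at this
        exact (algebraMap K L).injective this
      calc Fintype.card (K ≃ₐ[ℚ] K) ≤ Fintype.card (K →ₐ[ℚ] L) :=
            Fintype.card_le_of_injective _ hinj
        _ = Module.finrank ℚ K := AlgHom.card ℚ K L
        _ = 2 := hrank
    have hge : 2 ≤ Fintype.card (K ≃ₐ[ℚ] K) := by
      rw [← Finset.card_univ]
      calc 2 = ({AlgEquiv.refl, conj} : Finset (K ≃ₐ[ℚ] K)).card := by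
            rw [Finset.card_insert_of_notMem (by simpa using hconjne.symm),
              Finset.card_singleton]
        _ ≤ _ := Finset.card_le_card (Finset.subset_univ _)
    omega
  haveI : IsGalois ℚ K := IsGalois.of_card_aut_eq_finrank ℚ K (by rw [Nat.card_eq_fintype_card, hcard2, hrank])
  have huniv : (Finset.univ : Finset (K ≃ₐ[ℚ] K)) = {AlgEquiv.refl, conj} := by
    symm
    apply Finset.eq_univ_of_card
    rw [Finset.card_insert_of_notMem (by simpa using hconjne.symm),
      Finset.card_singleton, hcard2]
  have htr : algebraMap ℚ K (Algebra.trace ℚ K (X : K)) = ((a : 𝓞 K) : K) := by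
    rw [trace_eq_sum_automorphisms, huniv,
      Finset.sum_insert (by simpa using hconjne.symm), Finset.sum_singleton]
    simp only [AlgEquiv.coe_refl, id_eq]
    rw [hadef]
    push_cast
    exact congrArg _ (hσcoe X).symm
  -- the trace is an integer
  have hintX : IsIntegral ℤ (Algebra.trace ℚ K (X : K)) := by
    have ha' : IsIntegral ℤ ((a : 𝓞 K) : K) := NumberField.RingOfIntegers.isIntegral_coe a
    rw [← htr] at ha'
    exact (isIntegral_algebraMap_iff (algebraMap ℚ K).injective).mp ha'
  obtain ⟨t, ht⟩ := IsIntegrallyClosed.isIntegral_iff.mp hintX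
  have hta : ((t : ℤ) : 𝓞 K) = a := by
    apply NumberField.RingOfIntegers.coe_injective
    have h1 : algebraMap (𝓞 K) K ((t : ℤ) : 𝓞 K) = ((t : ℤ) : K) := map_intCast _ t
    have h2 : algebraMap ℚ K ((t : ℤ) : ℚ) = ((t : ℤ) : K) := by
      rw [show ((t : ℤ) : ℚ) = algebraMap ℤ ℚ t from (eq_intCast _ t).symm,
        ← IsScalarTower.algebraMap_apply, eq_intCast]
    rw [h1, ← h2, show ((t : ℤ) : ℚ) = algebraMap ℤ ℚ t from (eq_intCast _ t).symm, ht]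
    exact htr
  obtain ⟨b, hb⟩ := hsq
  -- p divides t^2 in ℤ
  have hdvd2 : (p : ℤ) ∣ t * t := by
    have hb' : ((t * t : ℤ) : 𝓞 K) = ((p : ℕ) : 𝓞 K) * b := by
      push_cast
      rw [hta]
      exact_mod_cast hb
    have hK : ((t * t : ℤ) : K) = ((p : ℕ) : K) * algebraMap (𝓞 K) K b := by
      have h5 := congrArg (algebraMap (𝓞 K) K) hb'
      rwa [map_intCast, map_mul, map_natCast] at h5
    have hbK : algebraMap (𝓞 K) K b = algebraMap ℚ K ((t * t : ℚ) / (p : ℚ)) := by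
      have hpne : ((p : ℕ) : K) ≠ 0 := by
        exact_mod_cast Nat.cast_ne_zero.mpr hp.pos.ne'
      have h3 : algebraMap ℚ K ((t : ℚ) * (t : ℚ)) = ((t * t : ℤ) : K) := by
        rw [show ((t : ℚ) * (t : ℚ)) = ((t * t : ℤ) : ℚ) by push_cast; ring,
          ← eq_intCast (algebraMap ℤ ℚ) (t * t), ← IsScalarTower.algebraMap_apply, eq_intCast]
      rw [map_div₀, show ((p : ℚ)) = (((p : ℕ) : ℚ)) by norm_cast, map_natCast, h3,
        eq_comm, div_eq_iff hpne, hK]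
      ring
    have hbint : IsIntegral ℤ ((t * t : ℚ) / (p : ℚ)) := by
      have := NumberField.RingOfIntegers.isIntegral_coe b
      rw [hbK] at this
      exact (isIntegral_algebraMap_iff (algebraMap ℚ K).injective).mp this
    obtain ⟨u, hu⟩ := IsIntegrallyClosed.isIntegral_iff.mp hbint
    refine ⟨u, ?_⟩
    have hpQ : ((p : ℕ) : ℚ) ≠ 0 := by exact_mod_cast hp.pos.ne'
    have : ((t * t : ℤ) : ℚ) = ((p : ℤ) * u : ℤ) := by
      push_cast
      rw [show ((u : ℚ)) = (t*t : ℚ)/(p:ℚ) by exact_mod_cast hu]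
      field_simp
    exact_mod_cast this
  have hpt : (p : ℤ) ∣ t := by
    have hpZ : Prime (p : ℤ) := Nat.prime_iff_prime_int.mp hp
    rcases (hpZ.dvd_mul.mp hdvd2) with h | h <;> exact h
  obtain ⟨m, hm⟩ := hpt
  refine ⟨m, ?_⟩
  rw [← hXcoe, ← ht, hm, eq_intCast (algebraMap ℤ ℚ)]
  push_cast
  ring
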